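/- arXiv:1906.12053 — 5 statements merged into one kernel-verified Lean document; each statement's English description precedes it below -/
import Mathlib

section
/- For all n ≥ 1, the sum ∑_{k=0}^{n} k · C(2k, k) / 4^k equals (2n+1)! / (3 · 2^{2n} · n! · (n-1)!). -/
theorem sum_k_central_binom_div_four_pow (n : ℕ) (hn : 1 ≤ n) :
    ∑ k ∈ Finset.range (n + 1), (k : ℚ) * (Nat.choose (2 * k) k : ℚ) / 4 ^ k =
      (Nat.factorial (2 * n + 1) : ℚ) /
        (3 * 2 ^ (2 * n) * (Nat.factorial n) * (Nat.factorial (n - 1))) := by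
  induction n with
  | zero => omega
  | succ m ih =>
    rcases Nat.eq_zero_or_pos m with h | h
    · subst h
      norm_num [Finset.sum_range_succ, Nat.factorial]
    · rw [Finset.sum_range_succ, ih h]
      have hchoose : (Nat.choose (2 * (m + 1)) (m + 1) : ℚ) =
          (Nat.factorial (2 * (m + 1)) : ℚ) /
            ((Nat.factorial (m + 1) : ℚ) * (Nat.factorial (m + 1) : ℚ)) := by
        have key := Nat.choose_mul_factorial_mul_factorial
          (show m + 1 ≤ 2 * (m + 1) by omega)
        rw [show 2 * (m + 1) - (m + 1) = m + 1 from by omega] at key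
        rw [eq_div_iff (by positivity), ← mul_assoc]
        exact_mod_cast key
      have hm1 : m - 1 + 1 = m := Nat.succ_pred_eq_of_pos h
      have hf1 : (Nat.factorial m : ℚ) = m * Nat.factorial (m - 1) := by
        rw [← hm1, Nat.factorial_succ]; push_cast [hm1]; ring
      have hf2 : (Nat.factorial (m + 1) : ℚ) = (m + 1) * Nat.factorial m := by
        rw [Nat.factorial_succ]; push_cast; ring
      have hf3 : (Nat.factorial (2 * (m + 1) + 1) : ℚ) =
          (2 * m + 3) * (2 * m + 2) * Nat.factorial (2 * m + 1) := by
        have : 2 * (m + 1) + 1 = (2 * m + 1) + 1 + 1 := by ring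
        rw [this, Nat.factorial_succ, Nat.factorial_succ]; push_cast; ring
      have hf4 : (Nat.factorial (2 * (m + 1)) : ℚ) =
          (2 * m + 2) * Nat.factorial (2 * m + 1) := by
        have : 2 * (m + 1) = (2 * m + 1) + 1 := by ring
        rw [this, Nat.factorial_succ]; push_cast; ring
      have hm0 : (m : ℚ) ≠ 0 := Nat.cast_ne_zero.mpr (by omega)
      have hfm : (Nat.factorial (m - 1) : ℚ) ≠ 0 := Nat.cast_ne_zero.mpr (Nat.factorial_ne_zero _)
      have hfm2 : (Nat.factorial (2 * m + 1) : ℚ) ≠ 0 := Nat.cast_ne_zero.mpr (Nat.factorial_ne_zero _)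
      simp only [Nat.add_sub_cancel]
      rw [hchoose, hf3, hf4, hf2, hf1]
      push_cast
      rw [show (4:ℚ) = 2 ^ 2 from by norm_num, ← pow_mul,
        show 2 * (m + 1) = 2 * m + 2 from by ring, pow_add]
      field_simp
end

section
/- Define c : ℕ → ℚ by c(2) = 2 and c(n) = 2n·c(n-1) + 2·(2n-2)!/(2^{n-1}·(n-1)!) for n ≥ 3. Then for all n ≥ 2, c(n) = 2^n · n! − (2n)!/(2^{n-1} · n!). -/
theorem comparable_pairs_closed_form (c : ℕ → ℚ)
    (h2 : c 2 = 2)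
    (hrec : ∀ n : ℕ, 3 ≤ n →
      c n = 2 * n * c (n - 1) +
        2 * (Nat.factorial (2 * n - 2) : ℚ) / (2 ^ (n - 1) * (Nat.factorial (n - 1)))) :
    ∀ n : ℕ, 2 ≤ n →
      c n = 2 ^ n * (Nat.factorial n : ℚ) -
        (Nat.factorial (2 * n) : ℚ) / (2 ^ (n - 1) * (Nat.factorial n)) := by
  intro n hn
  induction n, hn using Nat.le_induction with
  | base => norm_num [h2, Nat.factorial]
  | succ n hn ih =>
    have hr := hrec (n + 1) (by omega)
    have e1 : n + 1 - 1 = n := by omega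
    have e2 : 2 * (n + 1) - 2 = 2 * n := by omega
    have e3 : 2 * (n + 1) = 2 * n + 1 + 1 := by omega
    rw [e1, e2, ih] at hr
    rw [hr, e3]
    obtain ⟨m, rfl⟩ : ∃ m, n = m + 1 := ⟨n - 1, by omega⟩
    rw [Nat.factorial_succ (2 * (m + 1) + 1), Nat.factorial_succ (2 * (m + 1)),
      Nat.factorial_succ (m + 1), Nat.factorial_succ m]
    have hfn : (Nat.factorial m : ℚ) ≠ 0 := by exact_mod_cast Nat.factorial_ne_zero m
    have hp : (2 : ℚ) ^ m ≠ 0 := by positivity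
    simp only [Nat.add_sub_cancel]
    push_cast
    rw [pow_succ]
    field_simp
    ring
end

section
/- Define a : ℕ → ℚ by a(2) = 2 and, for n ≥ 3, a(n) = 2(n-1)·a(n-1) + (3n-2)·(2n-3)!/(2^{n-2}·(n-2)!) − 2^{n-1}·(n-1)!. Then for all n ≥ 2, a(n) = (2n)!/(2^n·(n-1)!) − 2^{n-1}·n!. -/
theorem one_reticulation_networks_closed_form (a : ℕ → ℚ)
    (h2 : a 2 = 2)
    (hrec : ∀ n : ℕ, 3 ≤ n →
      a n = 2 * (n - 1 : ℚ) * a (n - 1) +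
        (3 * n - 2 : ℚ) * (Nat.factorial (2 * n - 3) : ℚ) /
          (2 ^ (n - 2) * (Nat.factorial (n - 2))) -
        2 ^ (n - 1) * (Nat.factorial (n - 1) : ℚ)) :
    ∀ n : ℕ, 2 ≤ n →
      a n = (Nat.factorial (2 * n) : ℚ) / (2 ^ n * (Nat.factorial (n - 1))) -
        2 ^ (n - 1) * (Nat.factorial n : ℚ) := by
  intro n hn
  induction n, hn using Nat.le_induction with
  | base => rw [h2]; norm_num [Nat.factorial]
  | succ n hn IH =>
    obtain ⟨m, rfl⟩ : ∃ m, n = m + 2 := ⟨n - 2, by omega⟩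
    have hr := hrec (m + 3) (by omega)
    have e1 : 2 * (m + 3) - 3 = 2 * m + 3 := by omega
    have e2 : m + 3 - 1 = m + 2 := by omega
    have e3 : m + 3 - 2 = m + 1 := by omega
    have e4 : 2 * (m + 3) = 2 * m + 6 := by omega
    have e5 : 2 * (m + 2) = 2 * m + 4 := by omega
    rw [e1, e2, e3] at hr
    rw [e5] at IH
    rw [hr, IH, e4, e2]
    have f1 : Nat.factorial (2 * m + 6) = (2 * m + 6) * ((2 * m + 5) * Nat.factorial (2 * m + 4)) := by
      rw [show 2 * m + 6 = (2 * m + 5) + 1 from rfl, show 2 * m + 5 = (2 * m + 4) + 1 from rfl,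
        Nat.factorial_succ, Nat.factorial_succ]
    have f2 : Nat.factorial (2 * m + 4) = (2 * m + 4) * Nat.factorial (2 * m + 3) := by
      rw [show 2 * m + 4 = (2 * m + 3) + 1 from rfl, Nat.factorial_succ]
    have f3 : Nat.factorial (m + 2) = (m + 2) * Nat.factorial (m + 1) := by
      rw [show m + 2 = (m + 1) + 1 from rfl, Nat.factorial_succ]
    have f4 : Nat.factorial (m + 3) = (m + 3) * Nat.factorial (m + 2) := by
      rw [show m + 3 = (m + 2) + 1 from rfl, Nat.factorial_succ]
    have hpos1 : (Nat.factorial (m + 1) : ℚ) ≠ 0 := by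
      exact_mod_cast Nat.factorial_ne_zero _
    have hpow : (2 : ℚ) ^ (m + 1) ≠ 0 := by positivity
    rw [f1, f2, f4, f3]
    push_cast
    field_simp
    ring
end

section
/- Define b : ℕ → ℚ by b(2) = 0 and, for n ≥ 3, b(n) = 2(n-1)·b(n-1) + 3·(n·(2n-3)!/(2^{n-2}·(n-2)!) − 2^{n-1}·(n-1)!). Then for all n ≥ 2, b(n) = (n+2)·(2n)!/(2^n·n!) − 3·2^{n-1}·n!. -/
theorem one_reticulation_normal_networks_closed_form (b : ℕ → ℚ)
    (h2 : b 2 = 0)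
    (hrec : ∀ n : ℕ, 3 ≤ n →
      b n = 2 * (n - 1 : ℚ) * b (n - 1) +
        3 * ((n : ℚ) * (Nat.factorial (2 * n - 3) : ℚ) /
            (2 ^ (n - 2) * (Nat.factorial (n - 2))) -
          2 ^ (n - 1) * (Nat.factorial (n - 1) : ℚ))) :
    ∀ n : ℕ, 2 ≤ n →
      b n = (n + 2 : ℚ) * (Nat.factorial (2 * n) : ℚ) / (2 ^ n * (Nat.factorial n)) -
        3 * 2 ^ (n - 1) * (Nat.factorial n : ℚ) := by
  intro n hn
  obtain ⟨m, rfl⟩ := Nat.exists_eq_add_of_le hn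
  induction m with
  | zero => norm_num [h2, Nat.factorial]
  | succ m ih =>
    have e1 : 2 + (m + 1) = m + 3 := by omega
    have hr := hrec (m + 3) (by omega)
    rw [e1]
    have e2 : 2 + m = m + 2 := by omega
    replace ih := ih (by omega)
    rw [e2] at ih
    simp only [show m + 3 - 1 = m + 2 from by omega,
      show 2 * (m + 3) - 3 = 2 * m + 3 from by omega,
      show m + 3 - 2 = m + 1 from by omega,
      show 2 * (m + 3) = 2 * m + 6 from by omega,
      show 2 * m + 6 - 3 = 2 * m + 3 from by omega] at hr ⊢
    simp only [show 2 * (m + 2) = 2 * m + 4 from by omega,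
      show m + 2 - 1 = m + 1 from by omega] at ih
    rw [hr, ih]
    have f1 : (Nat.factorial (2 * m + 4) : ℚ) = (2 * m + 4) * Nat.factorial (2 * m + 3) := by
      rw [show 2 * m + 4 = (2 * m + 3) + 1 from rfl, Nat.factorial_succ]; push_cast; ring
    have f2 : (Nat.factorial (2 * m + 6) : ℚ) =
        (2 * m + 6) * ((2 * m + 5) * ((2 * m + 4) * Nat.factorial (2 * m + 3))) := by
      rw [show 2 * m + 6 = (2 * m + 5) + 1 from rfl, Nat.factorial_succ,
        show 2 * m + 5 = (2 * m + 4) + 1 from rfl, Nat.factorial_succ,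
        show 2 * m + 4 = (2 * m + 3) + 1 from rfl, Nat.factorial_succ]
      push_cast; ring
    have g1 : (Nat.factorial (m + 2) : ℚ) = (m + 2) * Nat.factorial (m + 1) := by
      rw [show m + 2 = (m + 1) + 1 from rfl, Nat.factorial_succ]; push_cast; ring
    have g2 : (Nat.factorial (m + 3) : ℚ) = (m + 3) * ((m + 2) * Nat.factorial (m + 1)) := by
      rw [show m + 3 = (m + 2) + 1 from rfl, Nat.factorial_succ,
        show m + 2 = (m + 1) + 1 from rfl, Nat.factorial_succ]
      push_cast; ring
    rw [f1, f2, g1, g2]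
    have hF : (0 : ℚ) < Nat.factorial (2 * m + 3) := by positivity
    have hG : (0 : ℚ) < Nat.factorial (m + 1) := by positivity
    have hm1 : (m : ℚ) + 1 > 0 := by positivity
    have hm2 : (m : ℚ) + 2 > 0 := by positivity
    have hm3 : (m : ℚ) + 3 > 0 := by positivity
    push_cast
    field_simp
    ring
end

section
/- For all n ≥ 1, 3·2^{n-1}·∑_{k=1}^{n-1} (k+1)·C(2k,k)/2^{2k} − 3·2^{n-1}·(n-1) = (n+2)·(2n)!/(2^n·n!·(n-1)!) − 3·2^{n-1}·n, where the sums are over the rationals. -/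
lemma aux_sum (m : ℕ) :
    (∑ k ∈ Finset.Icc 1 m, (k + 1 : ℚ) * (Nat.choose (2 * k) k : ℚ) / 2 ^ (2 * k)) =
    (m + 3) * (Nat.factorial (2 * m + 2) : ℚ) /
      (3 * 2 ^ (2 * m + 1) * (Nat.factorial (m + 1)) * (Nat.factorial m)) - 1 := by
  induction m with
  | zero => simp [Nat.factorial]
  | succ m ih =>
    rw [Finset.sum_Icc_succ_top (by omega : 1 ≤ m + 1), ih]
    have hch : ((2 * (m + 1)).choose (m + 1) : ℚ) *
        (Nat.factorial (m + 1)) * (Nat.factorial (m + 1)) = Nat.factorial (2 * m + 2) := by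
      have := Nat.choose_mul_factorial_mul_factorial (by omega : m + 1 ≤ 2 * (m + 1))
      have h2 : 2 * (m + 1) - (m + 1) = m + 1 := by omega
      rw [h2] at this
      have h3 : 2 * (m + 1) = 2 * m + 2 := by omega
      rw [h3] at this
      exact_mod_cast congrArg (Nat.cast : ℕ → ℚ) this
    have hf1 : (Nat.factorial (2 * (m + 1) + 2) : ℚ) =
        (2 * m + 4) * (2 * m + 3) * Nat.factorial (2 * m + 2) := by
      have : 2 * (m + 1) + 2 = (2 * m + 3) + 1 := by omega
      rw [this, Nat.factorial_succ, Nat.factorial_succ]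
      push_cast; ring
    have hf2 : (Nat.factorial (m + 1 + 1) : ℚ) = (m + 2) * Nat.factorial (m + 1) := by
      rw [Nat.factorial_succ]; push_cast; ring
    have hf3 : (Nat.factorial (m + 1) : ℚ) = (m + 1) * Nat.factorial m := by
      rw [Nat.factorial_succ]; push_cast; ring
    have hm : (Nat.factorial m : ℚ) ≠ 0 := by
      exact_mod_cast Nat.factorial_ne_zero m
    have hm1 : (Nat.factorial (m + 1) : ℚ) ≠ 0 := by
      exact_mod_cast Nat.factorial_ne_zero (m + 1)
    have h2m : (Nat.factorial (2 * m + 2) : ℚ) ≠ 0 := by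
      exact_mod_cast Nat.factorial_ne_zero (2 * m + 2)
    have hp : (2 : ℚ) ^ (2 * m + 1) ≠ 0 := by positivity
    have hch' : ((2 * (m + 1)).choose (m + 1) : ℚ) =
        Nat.factorial (2 * m + 2) / (Nat.factorial (m + 1) * Nat.factorial (m + 1)) := by
      field_simp
      linear_combination hch
    rw [hch', hf1, hf2, hf3]
    have hpow : (2 : ℚ) ^ (2 * (m + 1)) = 4 * 2 ^ (2 * m) := by
      have : 2 * (m + 1) = 2 * m + 2 := by omega
      rw [this]; ring
    have hpow2 : (2 : ℚ) ^ (2 * (m + 1) + 1) = 4 * 2 ^ (2 * m + 1) := by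
      have : 2 * (m + 1) + 1 = (2 * m + 1) + 2 := by omega
      rw [this]; ring
    have hpow3 : (2 : ℚ) ^ (2 * m + 1) = 2 * 2 ^ (2 * m) := by ring
    rw [hpow, hpow2, hpow3]
    have hp0 : (2 : ℚ) ^ (2 * m) ≠ 0 := by positivity
    push_cast
    field_simp
    ring

theorem key_sum_identity_b (n : ℕ) (hn : 1 ≤ n) :
    3 * 2 ^ (n - 1) *
        (∑ k ∈ Finset.Icc 1 (n - 1),
          (k + 1 : ℚ) * (Nat.choose (2 * k) k : ℚ) / 2 ^ (2 * k)) -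
      3 * 2 ^ (n - 1) * ((n : ℚ) - 1) =
    (n + 2 : ℚ) * (Nat.factorial (2 * n) : ℚ) /
        (2 ^ n * (Nat.factorial n) * (Nat.factorial (n - 1))) -
      3 * 2 ^ (n - 1) * (n : ℚ) := by
  obtain ⟨m, rfl⟩ : ∃ m, n = m + 1 := ⟨n - 1, by omega⟩
  have hs : m + 1 - 1 = m := rfl
  rw [hs, aux_sum]
  have h2n : 2 * (m + 1) = 2 * m + 2 := by omega
  rw [h2n]
  have hm : (Nat.factorial m : ℚ) ≠ 0 := by exact_mod_cast Nat.factorial_ne_zero m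
  have hm1 : (Nat.factorial (m + 1) : ℚ) ≠ 0 := by exact_mod_cast Nat.factorial_ne_zero (m + 1)
  have hp1 : (2 : ℚ) ^ m ≠ 0 := by positivity
  have hpow : (2 : ℚ) ^ (2 * m + 1) = 2 * (2 ^ m * 2 ^ m) := by
    rw [pow_succ, two_mul, pow_add]; ring
  have hpow2 : (2 : ℚ) ^ (m + 1) = 2 * 2 ^ m := by ring
  rw [hpow, hpow2]
  push_cast
  field_simp
  ring
end
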